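/- Let A ∈ ℝ^{n×n}, and suppose λ_r = Re(z*Az)/‖z‖² satisfies λ_r < 0 for some z. Fix such z, set b_a = ‖Aᵀz‖²/‖z‖² > 0, λ_c = Im(z*Az)/‖z‖². If β > 0 satisfies βλ_r + b_a > 0 and η satisfies η > (1/β)(√(−βλ_c²λ_r/(βλ_r + b_a)) − λ_r), then ηβ + λ_r > 0 and (ηβ + λ_r)²(βλ_r + b_a) + βλ_c²λ_r > 0. -/

import Mathlib

open Matrix Complex

/-- singular-C case conditions: with `λ_r = Re(z*Az)/‖z‖² < 0`,
`λ_c = Im(z*Az)/‖z‖²`, `b_a = ‖Aᵀz‖²/‖z‖² > 0`, `β > 0` with `βλ_r + b_a > 0`, and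
`η > (1/β)(√(−βλ_c²λ_r/(βλ_r + b_a)) − λ_r)`, we get `ηβ + λ_r > 0` and
`(ηβ + λ_r)²(βλ_r + b_a) + βλ_c²λ_r > 0`. -/
theorem tdrc_singular_C_conditions {n : ℕ} (A : Matrix (Fin n) (Fin n) ℝ)
    (z : Fin n → ℂ) (hz : z ≠ 0) (lr lc b_a η β : ℝ)
    (hlr : lr = (((star z) ⬝ᵥ ((A.map Complex.ofReal).mulVec z)) / (star z ⬝ᵥ z)).re)
    (hlc : lc = (((star z) ⬝ᵥ ((A.map Complex.ofReal).mulVec z)) / (star z ⬝ᵥ z)).im)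
    (hba : b_a = (((star ((Aᵀ.map Complex.ofReal).mulVec z)) ⬝ᵥ
        ((Aᵀ.map Complex.ofReal).mulVec z)) / (star z ⬝ᵥ z)).re)
    (hlr_neg : lr < 0) (hba_pos : 0 < b_a) (hβ : 0 < β)
    (hcond : 0 < β * lr + b_a)
    (hη : (1 / β) * (Real.sqrt (-(β * lc ^ 2 * lr) / (β * lr + b_a)) - lr) < η) :
    0 < η * β + lr ∧
    0 < (η * β + lr) ^ 2 * (β * lr + b_a) + β * lc ^ 2 * lr := by
  set s := Real.sqrt (-(β * lc ^ 2 * lr) / (β * lr + b_a)) with hs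
  have hs0 : 0 ≤ s := Real.sqrt_nonneg _
  have hsq : s ^ 2 = -(β * lc ^ 2 * lr) / (β * lr + b_a) := by
    rw [hs, Real.sq_sqrt]
    apply div_nonneg _ hcond.le
    have : β * lc ^ 2 * lr ≤ 0 :=
      mul_nonpos_of_nonneg_of_nonpos (mul_nonneg hβ.le (sq_nonneg lc)) hlr_neg.le
    linarith
  have h1 : s - lr < η * β := by
    have h := mul_lt_mul_of_pos_left hη hβ
    have e : β * (1 / β * (s - lr)) = s - lr := by field_simp
    rw [e] at h; linarith
  have h2 : s < η * β + lr := by linarith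
  have hpos : 0 < η * β + lr := lt_of_le_of_lt hs0 h2
  refine ⟨hpos, ?_⟩
  have h3 : s ^ 2 < (η * β + lr) ^ 2 := by
    nlinarith
  have h4 : s ^ 2 * (β * lr + b_a) < (η * β + lr) ^ 2 * (β * lr + b_a) :=
    (mul_lt_mul_iff_of_pos_right hcond).mpr h3
  rw [hsq, div_mul_cancel₀ _ (ne_of_gt hcond)] at h4
  linarith
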